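/- Let U ⊆ V, let H = (U, E(U)) be the induced subgraph of G on U (with the same edge weights), and let f : V → ℝ be a nonzero nonnegative function with f(v) = 0 for all v ∉ U and with Σ_{v ∈ U} w_H(v)·f(v)² > 0, where w_H(v) is the weighted degree of v in H. Suppose that for every t > 0 with V_f(t) nonempty, w(E(V_f(t), V∖U)) ≤ w(E(V_f(t), U∖V_f(t))). Then √(8·R_H(f|_U)) ≥ R_G(f), where R_H is the Rayleigh quotient computed in H and R_G the Rayleigh quotient computed in G. -/

import Mathlib

open scoped Classical

namespace CheegerHigher

noncomputable section

variable {n : ℕ}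

/-- Weighted degree of a vertex: `w(v) = ∑_u w(v,u)`. -/
def deg (w : Fin n → Fin n → ℝ) (v : Fin n) : ℝ := ∑ u, w v u

/-- Volume of a vertex set. -/
def vol (w : Fin n → Fin n → ℝ) (S : Finset (Fin n)) : ℝ := ∑ v ∈ S, deg w v

/-- Total weight of (ordered) pairs from `S` to `T`; for disjoint `S`, `T` this is `w(E(S,T))`. -/
def cutWeight (w : Fin n → Fin n → ℝ) (S T : Finset (Fin n)) : ℝ :=
  ∑ u ∈ S, ∑ v ∈ T, w u v

/-- Total edge weight `w(E)` (each unordered edge counted once). -/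
def totalWeight (w : Fin n → Fin n → ℝ) : ℝ := (1 / 2 : ℝ) * ∑ u, ∑ v, w u v

/-- Conductance of a set `S`. -/
noncomputable def conductance (w : Fin n → Fin n → ℝ) (S : Finset (Fin n)) : ℝ :=
  cutWeight w S Sᶜ / min (vol w S) (vol w Sᶜ)

/-- Conductance of the graph: minimum over nonempty proper subsets. -/
noncomputable def minConductance (w : Fin n → Fin n → ℝ) : ℝ :=
  sInf { x | ∃ S : Finset (Fin n), S.Nonempty ∧ S ≠ Finset.univ ∧ x = conductance w S }

/-- `k`-way expansion: min over `k` pairwise disjoint nonempty subsets of the max conductance. -/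
noncomputable def multiwayExpansion (w : Fin n → Fin n → ℝ) (k : ℕ) : ℝ :=
  sInf { x | ∃ S : Fin k → Finset (Fin n), (∀ i, (S i).Nonempty) ∧
      (∀ i j, i ≠ j → Disjoint (S i) (S j)) ∧ x = ⨆ i, conductance w (S i) }

/-- `‖f‖_w²  = ∑_v w(v) f(v)²`. -/
def normWsq (w : Fin n → Fin n → ℝ) (f : Fin n → ℝ) : ℝ := ∑ v, deg w v * f v ^ 2

/-- Dirichlet energy `∑_{{u,v} ∈ E} w(u,v) (f(u)-f(v))²` (each unordered edge once). -/
def energy (w : Fin n → Fin n → ℝ) (f : Fin n → ℝ) : ℝ :=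
  (1 / 2 : ℝ) * ∑ u, ∑ v, w u v * (f u - f v) ^ 2

/-- Rayleigh quotient of `f`. -/
noncomputable def rayleigh (w : Fin n → Fin n → ℝ) (f : Fin n → ℝ) : ℝ :=
  energy w f / normWsq w f

/-- Signless energy `∑_{{u,v} ∈ E} w(u,v) (f(u)+f(v))²`. -/
def signEnergy (w : Fin n → Fin n → ℝ) (f : Fin n → ℝ) : ℝ :=
  (1 / 2 : ℝ) * ∑ u, ∑ v, w u v * (f u + f v) ^ 2

/-- Signless Rayleigh quotient `R⁺(f)`. -/
noncomputable def rayleighP (w : Fin n → Fin n → ℝ) (f : Fin n → ℝ) : ℝ :=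
  signEnergy w f / normWsq w f

/-- Normalized Laplacian `𝓛 = I - D^{-1/2} A D^{-1/2}`. -/
noncomputable def normLap (w : Fin n → Fin n → ℝ) : Matrix (Fin n) (Fin n) ℝ :=
  Matrix.of fun u v =>
    (if u = v then (1 : ℝ) else 0) - w u v / (Real.sqrt (deg w u) * Real.sqrt (deg w v))

/-- Signless normalized Laplacian `𝓜 = I + D^{-1/2} A D^{-1/2}`. -/
noncomputable def signLap (w : Fin n → Fin n → ℝ) : Matrix (Fin n) (Fin n) ℝ :=
  Matrix.of fun u v =>
    (if u = v then (1 : ℝ) else 0) + w u v / (Real.sqrt (deg w u) * Real.sqrt (deg w v))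

/-- The `k`-th smallest eigenvalue of a Hermitian matrix (1-based index `k`). -/
noncomputable def sortedEig {A : Matrix (Fin n) (Fin n) ℝ} (hA : A.IsHermitian) (k : ℕ) : ℝ :=
  if h : k - 1 < n then hA.eigenvalues (Tuple.sort hA.eigenvalues ⟨k - 1, h⟩) else 0

/-- Threshold set `V_f(t) = {v : f(v) ≥ t}`. -/
noncomputable def thresholdSet (f : Fin n → ℝ) (t : ℝ) : Finset (Fin n) :=
  Finset.univ.filter fun v => t ≤ f v

/-- `φ(f)`: best conductance among threshold sets of `f` that are nonempty and proper. -/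
noncomputable def phiF (w : Fin n → Fin n → ℝ) (f : Fin n → ℝ) : ℝ :=
  sInf { x | ∃ t : ℝ, (thresholdSet f t).Nonempty ∧ thresholdSet f t ≠ Finset.univ ∧
      x = conductance w (thresholdSet f t) }

/-- Support of a function, as a finset. -/
noncomputable def supp (f : Fin n → ℝ) : Finset (Fin n) :=
  Finset.univ.filter fun v => f v ≠ 0

/-- `L_f(t) = {v : f(v) ≤ -t}`. -/
noncomputable def Lset (f : Fin n → ℝ) (t : ℝ) : Finset (Fin n) :=
  Finset.univ.filter fun v => f v ≤ -t

/-- `R_f(t) = {v : f(v) ≥ t}`. -/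
noncomputable def Rset (f : Fin n → ℝ) (t : ℝ) : Finset (Fin n) :=
  Finset.univ.filter fun v => t ≤ f v

/-- Bipartiteness ratio of an induced cut `(L,R)` (for disjoint `L`, `R`). -/
noncomputable def biRatio (w : Fin n → Fin n → ℝ) (L R : Finset (Fin n)) : ℝ :=
  (cutWeight w L L + cutWeight w R R + cutWeight w (L ∪ R) (L ∪ R)ᶜ) / vol w (L ∪ R)

/-- `β(f)`: best bipartiteness ratio among threshold cuts of `f`. -/
noncomputable def betaF (w : Fin n → Fin n → ℝ) (f : Fin n → ℝ) : ℝ :=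
  sInf { x | ∃ t : ℝ, 0 < t ∧ (Lset f t ∪ Rset f t).Nonempty ∧
      x = biRatio w (Lset f t) (Rset f t) }

/-- `β(G)`: minimum bipartiteness ratio over all induced cuts. -/
noncomputable def minBeta (w : Fin n → Fin n → ℝ) : ℝ :=
  sInf { x | ∃ L R : Finset (Fin n), Disjoint L R ∧ (L ∪ R).Nonempty ∧ x = biRatio w L R }

/-- Energy of `f` restricted to the interval `(b,a]`:
`∑_{{u,v} ∈ E} w(u,v) · len((b,a] ∩ [f(u),f(v)])²`. -/
def intervalEnergy (w : Fin n → Fin n → ℝ) (f : Fin n → ℝ) (b a : ℝ) : ℝ :=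
  (1 / 2 : ℝ) * ∑ u, ∑ v,
    w u v * max 0 (min a (max (f u) (f v)) - max b (min (f u) (f v))) ^ 2

/-- The relative distance `dist(x,R) = inf_{y ∈ R} |x-y|/y` from a point to a region. -/
noncomputable def regionDist (x : ℝ) (R : Set ℝ) : ℝ :=
  sInf ((fun y => |x - y| / y) '' R)

/-- `g` is a `(2k+1)`-step approximation of `f`: there are thresholds
`0 = t₀ ≤ t₁ ≤ … ≤ t_{2k}` and `g(v)` is a threshold closest to `f(v)`. -/
def IsStepApprox (f g : Fin n → ℝ) (k : ℕ) : Prop :=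
  ∃ t : Fin (2 * k + 1) → ℝ, t 0 = 0 ∧ Monotone t ∧
    ∀ v, (∃ i, g v = t i) ∧ ∀ i, |f v - g v| ≤ |f v - t i|

/-- `g` is a symmetric `(2k+1)`-step approximation of `f`: there are thresholds
`0 = t₀ ≤ t₁ ≤ … ≤ t_{2k}` and `g(v)` is a value among `{±t_i}` closest to `f(v)`. -/
def IsSymStepApprox (f g : Fin n → ℝ) (k : ℕ) : Prop :=
  ∃ t : Fin (2 * k + 1) → ℝ, t 0 = 0 ∧ Monotone t ∧
    ∀ v, (∃ i, g v = t i ∨ g v = -t i) ∧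
      ∀ i, |f v - g v| ≤ |f v - t i| ∧ |f v - g v| ≤ |f v + t i|

/-- Edge weights of the induced subgraph on `U`. -/
def inducedW (w : Fin n → Fin n → ℝ) (U : Finset (Fin n)) : Fin n → Fin n → ℝ :=
  fun u v => if u ∈ U ∧ v ∈ U then w u v else 0

/-- Uncutness `γ(L,R) = w(E(L)) + w(E(R)) + w(E(L∪R, complement))`. -/
noncomputable def uncut (w : Fin n → Fin n → ℝ) (L R : Finset (Fin n)) : ℝ :=
  (1 / 2 : ℝ) * cutWeight w L L + (1 / 2 : ℝ) * cutWeight w R R +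
    cutWeight w (L ∪ R) (L ∪ R)ᶜ

/-! ### Auxiliary lemmas for `rayleigh_enlargement` -/

section AuxEnlarge

variable {n : ℕ}

lemma inducedW_nonneg (w : Fin n → Fin n → ℝ) (hnn : ∀ u v, 0 ≤ w u v)
    (U : Finset (Fin n)) (u v : Fin n) : 0 ≤ inducedW w U u v := by
  unfold inducedW; split
  · exact hnn u v
  · exact le_refl 0

lemma inducedW_symm (w : Fin n → Fin n → ℝ) (hsym : ∀ u v, w u v = w v u)
    (U : Finset (Fin n)) (u v : Fin n) : inducedW w U u v = inducedW w U v u := by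
  unfold inducedW
  by_cases h : u ∈ U ∧ v ∈ U
  · simp [h, h.1, h.2, hsym u v]
  · have h' : ¬ (v ∈ U ∧ u ∈ U) := fun hc => h ⟨hc.2, hc.1⟩
    simp [h, h']

lemma inducedW_le (w : Fin n → Fin n → ℝ) (hnn : ∀ u v, 0 ≤ w u v)
    (U : Finset (Fin n)) (u v : Fin n) : inducedW w U u v ≤ w u v := by
  unfold inducedW; split
  · exact le_refl _
  · exact hnn u v

/-- `∑_u ∑_v w u v * f u ^ 2 = normWsq w f`. -/
lemma sum_sum_mul_sq_left (w : Fin n → Fin n → ℝ) (f : Fin n → ℝ) :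
    ∑ u, ∑ v, w u v * (f u) ^ 2 = normWsq w f := by
  unfold normWsq deg
  refine Finset.sum_congr rfl fun u _ => ?_
  rw [← Finset.sum_mul]

/-- coarea-style induction -/
lemma keyA (w : Fin n → Fin n → ℝ) (hsym : ∀ u v, w u v = w v u)
    (hnn : ∀ u v, 0 ≤ w u v) (U : Finset (Fin n)) :
    ∀ m : ℕ, ∀ f : Fin n → ℝ,
      ((Finset.univ.image f).filter (fun x => 0 < x)).card ≤ m →
      (∀ v, 0 ≤ f v) → (∀ v, v ∉ U → f v = 0) →
      (∀ t : ℝ, 0 < t → (thresholdSet f t).Nonempty →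
        cutWeight w (thresholdSet f t) Uᶜ ≤
          cutWeight w (thresholdSet f t) (U \ thresholdSet f t)) →
      ∑ v, (f v) ^ 2 * (∑ u, (w v u - inducedW w U v u)) ≤
        ∑ u, ∑ v, inducedW w U u v * max 0 ((f u) ^ 2 - (f v) ^ 2) := by
  have hRHS_nonneg : ∀ f : Fin n → ℝ,
      0 ≤ ∑ u, ∑ v, inducedW w U u v * max 0 ((f u) ^ 2 - (f v) ^ 2) := by
    intro f
    refine Finset.sum_nonneg fun u _ => Finset.sum_nonneg fun v _ => ?_
    exact mul_nonneg (inducedW_nonneg w hnn U u v) (le_max_left 0 _)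
  intro m
  induction m with
  | zero =>
    intro f hcard hfnn hfU hcut
    have hzero : ∀ v, f v = 0 := by
      intro v
      by_contra h
      have hpos : 0 < f v := lt_of_le_of_ne (hfnn v) (Ne.symm h)
      have hmem : f v ∈ (Finset.univ.image f).filter (fun x => 0 < x) :=
        Finset.mem_filter.mpr ⟨Finset.mem_image_of_mem f (Finset.mem_univ v), hpos⟩
      have := Finset.card_pos.mpr ⟨_, hmem⟩
      omega
    have : ∑ v, (f v) ^ 2 * (∑ u, (w v u - inducedW w U v u)) = 0 := by
      refine Finset.sum_eq_zero fun v _ => ?_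
      rw [hzero v]; ring
    rw [this]; exact hRHS_nonneg f
  | succ m ih =>
    intro f hcard hfnn hfU hcut
    by_cases hP : ((Finset.univ.image f).filter (fun x => 0 < x)).Nonempty
    swap
    · -- no positive values : f ≡ 0
      have hzero : ∀ v, f v = 0 := by
        intro v
        by_contra h
        exact hP ⟨f v, Finset.mem_filter.mpr ⟨Finset.mem_image_of_mem f (Finset.mem_univ v),
          lt_of_le_of_ne (hfnn v) (Ne.symm h)⟩⟩
      have : ∑ v, (f v) ^ 2 * (∑ u, (w v u - inducedW w U v u)) = 0 := by
        refine Finset.sum_eq_zero fun v _ => ?_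
        rw [hzero v]; ring
      rw [this]; exact hRHS_nonneg f
    · set P := (Finset.univ.image f).filter (fun x => 0 < x) with hP_def
      set a := P.max' hP with ha_def
      have haP : a ∈ P := P.max'_mem hP
      have ha_pos : 0 < a := (Finset.mem_filter.mp haP).2
      obtain ⟨v₀, -, hv₀⟩ := Finset.mem_image.mp (Finset.mem_filter.mp haP).1
      have hune : (Finset.univ : Finset (Fin n)).Nonempty := ⟨v₀, Finset.mem_univ _⟩
      have hle_a : ∀ v, f v ≤ a := by
        intro v
        rcases eq_or_lt_of_le (hfnn v) with h | h
        · rw [← h]; exact ha_pos.le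
        · exact P.le_max' _ (Finset.mem_filter.mpr
            ⟨Finset.mem_image_of_mem f (Finset.mem_univ v), h⟩)
      set b := Finset.univ.sup' hune (fun v => if f v < a then f v else 0) with hb_def
      have hb_nonneg : 0 ≤ b := by
        have h := Finset.le_sup' (f := fun v => if f v < a then f v else 0)
          (Finset.mem_univ v₀)
        have : ¬ (f v₀ < a) := by rw [hv₀]; exact lt_irrefl a
        rw [hb_def]
        simpa only [this, if_false, ↓reduceIte] using h
      have hb_lt : b < a := by
        rw [hb_def]
        refine (Finset.sup'_lt_iff hune).mpr fun v _ => ?_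
        by_cases h : f v < a
        · simpa [h] using h
        · simpa [h] using ha_pos
      have hb_ub : ∀ v, f v < a → f v ≤ b := by
        intro v hv
        have h := Finset.le_sup' (f := fun v => if f v < a then f v else 0)
          (Finset.mem_univ v)
        rw [hb_def]
        simpa only [hv, if_true, ↓reduceIte] using h
      have hb_mem : 0 < b → ∃ v, f v = b := by
        intro hb
        obtain ⟨v, -, hv⟩ := Finset.exists_mem_eq_sup' hune
          (fun v => if f v < a then f v else 0)
        by_cases h : f v < a
        · exact ⟨v, by rw [← hb_def] at hv; rw [hv, if_pos h]⟩
        · rw [← hb_def, if_neg h] at hv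
          rw [hv] at hb; exact absurd hb (lt_irrefl 0)
      set S := thresholdSet f a with hS_def
      have hSa : ∀ v, v ∈ S ↔ f v = a := by
        intro v
        simp only [hS_def, thresholdSet, Finset.mem_filter, Finset.mem_univ, true_and]
        exact ⟨fun h => le_antisymm (hle_a v) h, fun h => h.ge⟩
      have hS_ne : S.Nonempty := ⟨v₀, (hSa v₀).mpr hv₀⟩
      have hS_sub : ∀ v ∈ S, v ∈ U := by
        intro v hv
        by_contra h
        have := hfU v h
        rw [(hSa v).mp hv] at this
        exact absurd (this ▸ ha_pos) (lt_irrefl 0)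
      have hfS : ∀ v, v ∉ S → f v ≤ b := by
        intro v hv
        refine hb_ub v ?_
        by_contra h
        exact hv ((hSa v).mpr (le_antisymm (hle_a v) (not_lt.mp h)))
      set g := fun v => min (f v) b with hg_def
      have hgS : ∀ v, v ∈ S → g v = b := by
        intro v hv
        have : b ≤ f v := by rw [(hSa v).mp hv]; exact hb_lt.le
        exact min_eq_right this
      have hgN : ∀ v, v ∉ S → g v = f v := by
        intro v hv
        exact min_eq_left (hfS v hv)
      have hg_nonneg : ∀ v, 0 ≤ g v := fun v => le_min (hfnn v) hb_nonneg
      have hg_le_b : ∀ v, g v ≤ b := fun v => min_le_right _ _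
      have hg_U : ∀ v, v ∉ U → g v = 0 := by
        intro v hv
        show min (f v) b = 0
        rw [hfU v hv]
        exact min_eq_left hb_nonneg
      -- card bound
      have hg_card : ((Finset.univ.image g).filter (fun x => 0 < x)).card ≤ m := by
        have hsub : (Finset.univ.image g).filter (fun x => 0 < x) ⊆ P.erase a := by
          intro x hx
          obtain ⟨hx_im, hx_pos⟩ := Finset.mem_filter.mp hx
          obtain ⟨v, -, hv⟩ := Finset.mem_image.mp hx_im
          have hxb : x ≤ b := hv ▸ hg_le_b v
          refine Finset.mem_erase.mpr ⟨fun h => absurd (h ▸ hxb) (not_le.mpr hb_lt), ?_⟩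
          by_cases h : f v ≤ b
          · have hgv : g v = f v := min_eq_left h
            refine Finset.mem_filter.mpr
              ⟨Finset.mem_image.mpr ⟨v, Finset.mem_univ v, ?_⟩, hx_pos⟩
            rw [← hgv]; exact hv
          · have hgv : g v = b := min_eq_right (not_le.mp h).le
            rw [hgv] at hv
            obtain ⟨u, hu⟩ := hb_mem (hv ▸ hx_pos)
            refine Finset.mem_filter.mpr
              ⟨Finset.mem_image.mpr ⟨u, Finset.mem_univ u, ?_⟩, hx_pos⟩
            rw [hu]; exact hv
        have h1 : ((Finset.univ.image g).filter (fun x => 0 < x)).card ≤ (P.erase a).card :=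
          Finset.card_le_card hsub
        have h2 : (P.erase a).card = P.card - 1 := Finset.card_erase_of_mem haP
        have h3 : 1 ≤ P.card := Finset.card_pos.mpr hP
        omega
      -- threshold sets of g
      have hg_thresh : ∀ t : ℝ, 0 < t → (thresholdSet g t).Nonempty →
          thresholdSet g t = thresholdSet f t := by
        intro t ht hne
        obtain ⟨v₁, hv₁⟩ := hne
        have htb : t ≤ b := le_trans (Finset.mem_filter.mp hv₁).2 (hg_le_b v₁)
        ext v
        simp only [thresholdSet, Finset.mem_filter, Finset.mem_univ, true_and]
        constructor
        · intro h; exact le_trans h (min_le_left _ _)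
        · intro h; exact le_min h htb
      have hg_cut : ∀ t : ℝ, 0 < t → (thresholdSet g t).Nonempty →
          cutWeight w (thresholdSet g t) Uᶜ ≤
            cutWeight w (thresholdSet g t) (U \ thresholdSet g t) := by
        intro t ht hne
        rw [hg_thresh t ht hne]
        exact hcut t ht (hg_thresh t ht hne ▸ hne)
      have IH := ih g hg_card hg_nonneg hg_U hg_cut
      -- arithmetic identities
      have hab : 0 ≤ a ^ 2 - b ^ 2 := by nlinarith
      -- (i) LHS split
      have hLHS : ∑ v, (f v) ^ 2 * (∑ u, (w v u - inducedW w U v u)) =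
          ∑ v, (g v) ^ 2 * (∑ u, (w v u - inducedW w U v u)) +
            (a ^ 2 - b ^ 2) * (∑ v ∈ S, ∑ u, (w v u - inducedW w U v u)) := by
        have hpt : ∀ v : Fin n, (f v) ^ 2 * (∑ u, (w v u - inducedW w U v u)) =
            (g v) ^ 2 * (∑ u, (w v u - inducedW w U v u)) +
              (if v ∈ S then (a ^ 2 - b ^ 2) * (∑ u, (w v u - inducedW w U v u)) else 0) := by
          intro v
          by_cases hv : v ∈ S
          · rw [if_pos hv, hgS v hv, (hSa v).mp hv]; ring
          · rw [if_neg hv, hgN v hv]; ring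
        rw [Finset.sum_congr rfl (fun v _ => hpt v), Finset.sum_add_distrib]
        congr 1
        rw [Finset.sum_ite_mem, Finset.univ_inter, Finset.mul_sum]
      -- (ii) cut identity
      have hCut2 : ∑ v ∈ S, ∑ u, (w v u - inducedW w U v u) = cutWeight w S Uᶜ := by
        unfold cutWeight
        refine Finset.sum_congr rfl fun v hv => ?_
        have hvU : v ∈ U := hS_sub v hv
        have hptc : ∀ u : Fin n, w v u - inducedW w U v u = if u ∈ Uᶜ then w v u else 0 := by
          intro u
          by_cases hu : u ∈ U
          · simp [inducedW, hvU, hu]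
          · simp [inducedW, hvU, hu]
        rw [Finset.sum_congr rfl (fun u _ => hptc u), Finset.sum_ite_mem, Finset.univ_inter]
      -- (iii) RHS split
      have hRHS : ∑ u, ∑ v, inducedW w U u v * max 0 ((f u) ^ 2 - (f v) ^ 2) =
          ∑ u, ∑ v, inducedW w U u v * max 0 ((g u) ^ 2 - (g v) ^ 2) +
            (a ^ 2 - b ^ 2) * cutWeight w S (U \ S) := by
        have hpt : ∀ u v : Fin n, inducedW w U u v * max 0 ((f u) ^ 2 - (f v) ^ 2) =
            inducedW w U u v * max 0 ((g u) ^ 2 - (g v) ^ 2) +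
              (if u ∈ S ∧ v ∈ U \ S then (a ^ 2 - b ^ 2) * w u v else 0) := by
          intro u v
          by_cases hu : u ∈ S
          · by_cases hv : v ∈ S
            · rw [if_neg, (hSa u).mp hu, (hSa v).mp hv, hgS u hu, hgS v hv]
              · simp
              · rintro ⟨-, hv'⟩; exact (Finset.mem_sdiff.mp hv').2 hv
            · have hfv : f v ≤ b := hfS v hv
              have hgv : g v = f v := hgN v hv
              have hgu : g u = b := hgS u hu
              have hfu : f u = a := (hSa u).mp hu
              by_cases hvU : v ∈ U
              · have huU : u ∈ U := hS_sub u hu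
                rw [if_pos ⟨hu, Finset.mem_sdiff.mpr ⟨hvU, hv⟩⟩]
                have hw' : inducedW w U u v = w u v := if_pos ⟨huU, hvU⟩
                rw [hw', hgu, hgv, hfu, max_eq_right, max_eq_right]
                · ring
                · nlinarith [hfnn v]
                · nlinarith [hfnn v]
              · have h1 : inducedW w U u v = 0 := by
                  simp [inducedW, hvU]
                rw [if_neg, h1]
                · ring
                · rintro ⟨-, hv'⟩; exact hvU (Finset.mem_sdiff.mp hv').1
          · have hfu : f u ≤ b := hfS u hu
            have hgu : g u = f u := hgN u hu
            rw [if_neg (fun hc => hu hc.1)]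
            by_cases hv : v ∈ S
            · have hfv : f v = a := (hSa v).mp hv
              have hgv : g v = b := hgS v hv
              rw [hgu, hgv, hfv, max_eq_left, max_eq_left]
              · ring
              · nlinarith [hfnn u]
              · nlinarith [hfnn u]
            · rw [hgu, hgN v hv]; ring
        have hif : ∑ u, ∑ v, (if u ∈ S ∧ v ∈ U \ S then (a ^ 2 - b ^ 2) * w u v else 0)
            = (a ^ 2 - b ^ 2) * cutWeight w S (U \ S) := by
          unfold cutWeight
          have h1 : ∀ u : Fin n, ∑ v, (if u ∈ S ∧ v ∈ U \ S then (a ^ 2 - b ^ 2) * w u v else 0)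
              = if u ∈ S then ∑ v ∈ U \ S, (a ^ 2 - b ^ 2) * w u v else 0 := by
            intro u
            by_cases hu : u ∈ S
            · simp only [hu, true_and]
              rw [Finset.sum_ite_mem, Finset.univ_inter]
              simp
            · simp [hu]
          rw [Finset.sum_congr rfl (fun u _ => h1 u), Finset.sum_ite_mem, Finset.univ_inter,
            Finset.mul_sum]
          refine Finset.sum_congr rfl fun u _ => ?_
          rw [Finset.mul_sum]
        rw [Finset.sum_congr rfl (fun u (_ : u ∈ Finset.univ) =>
          Finset.sum_congr rfl (fun v (_ : v ∈ Finset.univ) => hpt u v))]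
        simp only [Finset.sum_add_distrib]
        rw [hif]
      have hcut_a := hcut a ha_pos hS_ne
      rw [hLHS, hRHS, hCut2]
      have := mul_le_mul_of_nonneg_left hcut_a hab
      linarith [IH]

lemma sum_sum_mul_sq_right (w : Fin n → Fin n → ℝ) (hsym : ∀ u v, w u v = w v u)
    (f : Fin n → ℝ) : ∑ u, ∑ v, w u v * (f v) ^ 2 = normWsq w f := by
  rw [Finset.sum_comm]
  unfold normWsq deg
  refine Finset.sum_congr rfl fun v _ => ?_
  rw [← Finset.sum_mul]
  congr 1
  exact Finset.sum_congr rfl fun u _ => hsym u v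

lemma normWsq_split (w : Fin n → Fin n → ℝ) (U : Finset (Fin n)) (f : Fin n → ℝ) :
    normWsq w f = normWsq (inducedW w U) f +
      ∑ v, (f v) ^ 2 * (∑ u, (w v u - inducedW w U v u)) := by
  unfold normWsq deg
  rw [← Finset.sum_add_distrib]
  refine Finset.sum_congr rfl fun v _ => ?_
  rw [Finset.sum_sub_distrib]
  ring

lemma energy_split (w : Fin n → Fin n → ℝ) (hsym : ∀ u v, w u v = w v u)
    (U : Finset (Fin n)) (f : Fin n → ℝ) (hfU : ∀ v, v ∉ U → f v = 0) :
    energy w f = energy (inducedW w U) f +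
      ∑ v, (f v) ^ 2 * (∑ u, (w v u - inducedW w U v u)) := by
  unfold energy
  have hpt : ∀ u v : Fin n, w u v * (f u - f v) ^ 2 =
      inducedW w U u v * (f u - f v) ^ 2 +
        ((w u v - inducedW w U u v) * (f u) ^ 2 +
          (w u v - inducedW w U u v) * (f v) ^ 2) := by
    intro u v
    by_cases h : u ∈ U ∧ v ∈ U
    · have hw : inducedW w U u v = w u v := if_pos h
      rw [hw]; ring
    · have h0 : inducedW w U u v = 0 := if_neg h
      have hfz : f u * f v = 0 := by
        rcases not_and_or.mp h with h' | h'
        · rw [hfU u h']; ring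
        · rw [hfU v h']; ring
      rw [h0]
      linear_combination (-2 * w u v) * hfz
  have hB1 : ∑ u, ∑ v, (w u v - inducedW w U u v) * (f u) ^ 2
      = ∑ v, (f v) ^ 2 * (∑ u, (w v u - inducedW w U v u)) := by
    refine Finset.sum_congr rfl fun u _ => ?_
    rw [Finset.mul_sum]
    exact Finset.sum_congr rfl fun v _ => mul_comm _ _
  have hB2 : ∑ u, ∑ v, (w u v - inducedW w U u v) * (f v) ^ 2
      = ∑ v, (f v) ^ 2 * (∑ u, (w v u - inducedW w U v u)) := by
    rw [Finset.sum_comm]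
    refine Finset.sum_congr rfl fun v _ => ?_
    rw [Finset.mul_sum]
    refine Finset.sum_congr rfl fun u _ => ?_
    rw [hsym u v, inducedW_symm w hsym U u v]
    ring
  rw [Finset.sum_congr rfl (fun u (_ : u ∈ Finset.univ) =>
    Finset.sum_congr rfl (fun v (_ : v ∈ Finset.univ) => hpt u v))]
  simp only [Finset.sum_add_distrib]
  rw [hB1, hB2]
  ring

lemma energy_nonneg (w : Fin n → Fin n → ℝ) (hnn : ∀ u v, 0 ≤ w u v) (f : Fin n → ℝ) :
    0 ≤ energy w f := by
  unfold energy
  have h : (0:ℝ) ≤ ∑ u, ∑ v, w u v * (f u - f v) ^ 2 :=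
    Finset.sum_nonneg fun u _ => Finset.sum_nonneg fun v _ =>
      mul_nonneg (hnn u v) (sq_nonneg _)
  linarith

lemma energy_le_two_norm (w : Fin n → Fin n → ℝ) (hsym : ∀ u v, w u v = w v u)
    (hnn : ∀ u v, 0 ≤ w u v) (f : Fin n → ℝ) : energy w f ≤ 2 * normWsq w f := by
  unfold energy
  have hpt : ∀ u v : Fin n, w u v * (f u - f v) ^ 2 ≤
      2 * (w u v * (f u) ^ 2) + 2 * (w u v * (f v) ^ 2) := by
    intro u v
    nlinarith [mul_nonneg (hnn u v) (sq_nonneg (f u + f v))]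
  have h : ∑ u, ∑ v, w u v * (f u - f v) ^ 2 ≤
      ∑ u, ∑ v, (2 * (w u v * (f u) ^ 2) + 2 * (w u v * (f v) ^ 2)) :=
    Finset.sum_le_sum fun u _ => Finset.sum_le_sum fun v _ => hpt u v
  have he : ∑ u, ∑ v, (2 * (w u v * (f u) ^ 2) + 2 * (w u v * (f v) ^ 2)) =
      4 * normWsq w f := by
    simp only [Finset.sum_add_distrib, ← Finset.mul_sum]
    rw [sum_sum_mul_sq_left w f, sum_sum_mul_sq_right w hsym f]
    ring
  rw [he] at h
  linarith

lemma kmax_le_sqrt (w : Fin n → Fin n → ℝ) (hsym : ∀ u v, w u v = w v u)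
    (hnn : ∀ u v, 0 ≤ w u v) (U : Finset (Fin n)) (f : Fin n → ℝ)
    (hfnn : ∀ v, 0 ≤ f v) :
    ∑ u, ∑ v, inducedW w U u v * max 0 ((f u) ^ 2 - (f v) ^ 2) ≤
      Real.sqrt (8 * energy (inducedW w U) f * normWsq (inducedW w U) f) := by
  set w' := inducedW w U with hw'
  have hw'nn : ∀ u v, 0 ≤ w' u v := inducedW_nonneg w hnn U
  have hw'sym : ∀ u v, w' u v = w' v u := inducedW_symm w hsym U
  have hpt : ∀ u v : Fin n, w' u v * max 0 ((f u) ^ 2 - (f v) ^ 2) ≤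
      (Real.sqrt (w' u v) * |f u - f v|) * (Real.sqrt (w' u v) * (f u + f v)) := by
    intro u v
    have hssum : 0 ≤ f u + f v := by linarith [hfnn u, hfnn v]
    have h1 : (Real.sqrt (w' u v) * |f u - f v|) * (Real.sqrt (w' u v) * (f u + f v))
        = w' u v * (|f u - f v| * (f u + f v)) := by
      rw [show (Real.sqrt (w' u v) * |f u - f v|) * (Real.sqrt (w' u v) * (f u + f v))
          = (Real.sqrt (w' u v) * Real.sqrt (w' u v)) * (|f u - f v| * (f u + f v)) by ring,
        Real.mul_self_sqrt (hw'nn u v)]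
    have h2 : max 0 ((f u) ^ 2 - (f v) ^ 2) ≤ |f u - f v| * (f u + f v) := by
      apply max_le
      · exact mul_nonneg (abs_nonneg _) hssum
      · rw [show (f u) ^ 2 - (f v) ^ 2 = (f u - f v) * (f u + f v) by ring]
        exact mul_le_mul_of_nonneg_right (le_abs_self _) hssum
    calc w' u v * max 0 ((f u) ^ 2 - (f v) ^ 2)
        ≤ w' u v * (|f u - f v| * (f u + f v)) :=
          mul_le_mul_of_nonneg_left h2 (hw'nn u v)
      _ = _ := h1.symm
  have hCS := Real.sum_mul_le_sqrt_mul_sqrt (Finset.univ ×ˢ (Finset.univ : Finset (Fin n)))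
    (fun p => Real.sqrt (w' p.1 p.2) * |f p.1 - f p.2|)
    (fun p => Real.sqrt (w' p.1 p.2) * (f p.1 + f p.2))
  simp only [Finset.sum_product] at hCS
  have e1 : ∑ u, ∑ v, (Real.sqrt (w' u v) * |f u - f v|) ^ 2 =
      2 * energy w' f := by
    unfold energy
    rw [Finset.sum_congr rfl (fun u (_ : u ∈ Finset.univ) =>
      Finset.sum_congr rfl (fun v (_ : v ∈ Finset.univ) => by
        rw [mul_pow, Real.sq_sqrt (hw'nn u v), sq_abs]))]
    ring
  have e2 : ∑ u, ∑ v, (Real.sqrt (w' u v) * (f u + f v)) ^ 2 ≤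
      4 * normWsq w' f := by
    rw [Finset.sum_congr rfl (fun u (_ : u ∈ Finset.univ) =>
      Finset.sum_congr rfl (fun v (_ : v ∈ Finset.univ) => by
        rw [mul_pow, Real.sq_sqrt (hw'nn u v)]))]
    have hpt4 : ∀ u v : Fin n, w' u v * (f u + f v) ^ 2 ≤
        2 * (w' u v * (f u) ^ 2) + 2 * (w' u v * (f v) ^ 2) := by
      intro u v
      nlinarith [mul_nonneg (hw'nn u v) (sq_nonneg (f u - f v))]
    have h : ∑ u, ∑ v, w' u v * (f u + f v) ^ 2 ≤
        ∑ u, ∑ v, (2 * (w' u v * (f u) ^ 2) + 2 * (w' u v * (f v) ^ 2)) :=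
      Finset.sum_le_sum fun u _ => Finset.sum_le_sum fun v _ => hpt4 u v
    have he : ∑ u, ∑ v, (2 * (w' u v * (f u) ^ 2) + 2 * (w' u v * (f v) ^ 2)) =
        4 * normWsq w' f := by
      simp only [Finset.sum_add_distrib, ← Finset.mul_sum]
      rw [sum_sum_mul_sq_left w' f, sum_sum_mul_sq_right w' hw'sym f]
      ring
    rw [he] at h
    exact h
  have hKle : ∑ u, ∑ v, w' u v * max 0 ((f u) ^ 2 - (f v) ^ 2) ≤
      ∑ u, ∑ v, (Real.sqrt (w' u v) * |f u - f v|) * (Real.sqrt (w' u v) * (f u + f v)) :=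
    Finset.sum_le_sum fun u _ => Finset.sum_le_sum fun v _ => hpt u v
  have hnn2 : 0 ≤ 2 * energy w' f := by
    have := energy_nonneg w' hw'nn f; linarith
  have hnnN : 0 ≤ normWsq w' f := by
    unfold normWsq
    refine Finset.sum_nonneg fun v _ => mul_nonneg ?_ (sq_nonneg _)
    exact Finset.sum_nonneg fun u _ => hw'nn v u
  calc ∑ u, ∑ v, w' u v * max 0 ((f u) ^ 2 - (f v) ^ 2)
      ≤ ∑ u, ∑ v, (Real.sqrt (w' u v) * |f u - f v|) *
          (Real.sqrt (w' u v) * (f u + f v)) := hKle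
    _ ≤ Real.sqrt (∑ u, ∑ v, (Real.sqrt (w' u v) * |f u - f v|) ^ 2) *
          Real.sqrt (∑ u, ∑ v, (Real.sqrt (w' u v) * (f u + f v)) ^ 2) := hCS
    _ ≤ Real.sqrt (2 * energy w' f) * Real.sqrt (4 * normWsq w' f) := by
        rw [e1]
        exact mul_le_mul_of_nonneg_left (Real.sqrt_le_sqrt e2) (Real.sqrt_nonneg _)
    _ = Real.sqrt (8 * energy w' f * normWsq w' f) := by
        rw [← Real.sqrt_mul hnn2]
        congr 1
        ring

lemma final_arith (E N C : ℝ) (hN : 0 < N) (hE : 0 ≤ E) (hE2 : E ≤ 2 * N)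
    (hC : 0 ≤ C) (hC2 : C ≤ Real.sqrt (8 * E * N)) :
    (E + C) / (N + C) ≤ Real.sqrt (8 * (E / N)) := by
  set T := Real.sqrt (8 * (E / N)) with hT
  have hT0 : 0 ≤ T := Real.sqrt_nonneg _
  have hS0 : 0 ≤ Real.sqrt (8 * E * N) := Real.sqrt_nonneg _
  have hTN : T * N = Real.sqrt (8 * E * N) := by
    rw [hT, ← Real.sqrt_sq hN.le, ← Real.sqrt_mul (by positivity)]
    congr 1
    field_simp
    rw [Real.sq_sqrt (sq_nonneg N)]
  have hTS : T * Real.sqrt (8 * E * N) = 8 * E := by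
    rw [hT, ← Real.sqrt_mul (by positivity),
      show 8 * (E / N) * (8 * E * N) = (8 * E) ^ 2 by field_simp]
    exact Real.sqrt_sq (by positivity)
  rw [div_le_iff₀ (by linarith)]
  by_cases hT1 : 1 ≤ T
  · have hET : E ≤ T * N := by
      rw [hTN]
      have h8 : E ^ 2 ≤ 8 * E * N := by nlinarith
      calc E = Real.sqrt (E ^ 2) := (Real.sqrt_sq hE).symm
        _ ≤ _ := Real.sqrt_le_sqrt h8
    nlinarith
  · push_neg at hT1
    nlinarith [mul_nonneg (sub_nonneg.mpr hC2) (sub_nonneg.mpr hT1.le), hTN, hTS]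

end AuxEnlarge

/-- If every nonempty threshold set of `f` has at most as much
edge weight to `V∖U` as within `U` to its complement in `U`, then
`√(8·R_H(f)) ≥ R_G(f)` for the induced subgraph `H` on `U`. -/
theorem rayleigh_enlargement
    (hn : 2 ≤ n) (w : Fin n → Fin n → ℝ)
    (hsym : ∀ u v, w u v = w v u) (hnn : ∀ u v, 0 ≤ w u v)
    (hloop : ∀ v, w v v = 0) (hdeg : ∀ v, 1 ≤ deg w v)
    (U : Finset (Fin n)) (f : Fin n → ℝ) (hf0 : f ≠ 0) (hfnn : ∀ v, 0 ≤ f v)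
    (hfU : ∀ v, v ∉ U → f v = 0)
    (hpos : 0 < normWsq (inducedW w U) f)
    (hcut : ∀ t : ℝ, 0 < t → (thresholdSet f t).Nonempty →
      cutWeight w (thresholdSet f t) Uᶜ ≤
        cutWeight w (thresholdSet f t) (U \ thresholdSet f t)) :
    rayleigh w f ≤ Real.sqrt (8 * rayleigh (inducedW w U) f) := by
  have hCnn : 0 ≤ ∑ v, (f v) ^ 2 * (∑ u, (w v u - inducedW w U v u)) :=
    Finset.sum_nonneg fun v _ => mul_nonneg (sq_nonneg _)
      (Finset.sum_nonneg fun u _ => sub_nonneg.mpr (inducedW_le w hnn U v u))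
  have hEsplit := energy_split w hsym U f hfU
  have hNsplit := normWsq_split w U f
  have hKey := keyA w hsym hnn U (((Finset.univ.image f).filter (fun x => 0 < x)).card)
    f le_rfl hfnn hfU hcut
  have hCS := kmax_le_sqrt w hsym hnn U f hfnn
  have hE2 := energy_le_two_norm (inducedW w U) (inducedW_symm w hsym U)
    (inducedW_nonneg w hnn U) f
  have hEnn := energy_nonneg (inducedW w U) (inducedW_nonneg w hnn U) f
  have hfinal := final_arith (energy (inducedW w U) f) (normWsq (inducedW w U) f)
    (∑ v, (f v) ^ 2 * (∑ u, (w v u - inducedW w U v u)))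
    hpos hEnn hE2 hCnn (le_trans hKey hCS)
  unfold rayleigh
  rw [hEsplit, hNsplit]
  exact hfinal

end

end CheegerHigher
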